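/- Let ε ∈ (0,1) and k ≥ 1/ε, and let R be a finite set of rectangles packed in a horizontal container C (i.e., any horizontal line crosses at most one rectangle, equivalently the rectangles are stacked vertically, so their heights sum to at most h(C) and each width is at most w(C)). Then there is a subset R' ⊆ R with p(R') ≥ (1−ε)·p(R) that can be packed in a container C' with w(C') ≤ w(C), h(C') ≤ h(C), where w(C') is the width of some rectangle in R and h(C') is expressible as a sum of at most k heights of rectangles in R plus an integer multiple (between 0 and |R|) of the height of one rectangle in R. -/
import Mathlib

open Finset

lemma exists_top_set {ι : Type*} [DecidableEq ι] (h : ι → ℝ) :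
    ∀ (n : ℕ) (R : Finset ι), n ≤ R.card →
      ∃ S ⊆ R, S.card = n ∧ ∀ i ∈ S, ∀ j ∈ R \ S, h j ≤ h i := by
  intro n
  induction n with
  | zero => intro R _; exact ⟨∅, empty_subset R, rfl, by simp⟩
  | succ n ih =>
    intro R hn
    obtain ⟨S, hSR, hScard, hStop⟩ := ih R (Nat.le_of_succ_le hn)
    have hne : (R \ S).Nonempty := by
      rw [← Finset.card_pos, Finset.card_sdiff_of_subset hSR]
      omega
    obtain ⟨a, haRS, hamax⟩ := Finset.exists_max_image (R \ S) h hne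
    have haR : a ∈ R := (Finset.mem_sdiff.mp haRS).1
    have haS : a ∉ S := (Finset.mem_sdiff.mp haRS).2
    refine ⟨insert a S, Finset.insert_subset haR hSR, by rw [Finset.card_insert_of_notMem haS, hScard], ?_⟩
    intro i hi j hj
    have hjRS : j ∈ R \ S := by
      rw [Finset.mem_sdiff] at hj ⊢
      exact ⟨hj.1, fun hjS => hj.2 (Finset.mem_insert_of_mem hjS)⟩
    rcases Finset.mem_insert.mp hi with rfl | hiS
    · exact hamax j hjRS
    · exact hStop i hiS j hjRS

theorem round_horizontal_container {ι : Type*} [DecidableEq ι]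
    (R : Finset ι) (hR : R.Nonempty) (w h p : ι → ℝ) (W H ε : ℝ) (k : ℕ)
    (hε0 : 0 < ε) (hε1 : ε < 1) (hk : 1 / ε ≤ (k : ℝ))
    (hpos : ∀ i ∈ R, 0 < w i ∧ 0 < h i ∧ 0 < p i)
    (hwidth : ∀ i ∈ R, w i ≤ W) (hheight : ∑ i ∈ R, h i ≤ H) :
    ∃ R' ⊆ R, (1 - ε) * ∑ i ∈ R, p i ≤ ∑ i ∈ R', p i ∧
      ∃ W' H' : ℝ, W' ≤ W ∧ H' ≤ H ∧
        (∃ i ∈ R, W' = w i) ∧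
        (∃ l : Finset ι, l ⊆ R ∧ l.card ≤ k ∧
          ∃ j ∈ R, ∃ m : ℕ, m ≤ R.card ∧ H' = (∑ i ∈ l, h i) + (m : ℝ) * h j) ∧
        (∀ i ∈ R', w i ≤ W') ∧ (∑ i ∈ R', h i ≤ H') := by
  -- widest rectangle
  obtain ⟨a, haR, hamax⟩ := Finset.exists_max_image R w hR
  have hpsum_nonneg : (0:ℝ) ≤ ∑ i ∈ R, p i :=
    Finset.sum_nonneg fun i hi => (hpos i hi).2.2.le
  by_cases hcard : R.card ≤ k
  · -- take everything
    refine ⟨R, subset_rfl, ?_, w a, ∑ i ∈ R, h i, hwidth a haR, hheight,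
      ⟨a, haR, rfl⟩, ⟨R, subset_rfl, hcard, a, haR, 0, Nat.zero_le _, by simp⟩,
      fun i hi => hamax i hi, le_refl _⟩
    nlinarith
  · push_neg at hcard
    have hk1 : k + 1 ≤ R.card := hcard
    obtain ⟨S, hSR, hScard, hStop⟩ := exists_top_set h (k+1) R hk1
    have hSne : S.Nonempty := Finset.card_pos.mp (by omega)
    obtain ⟨t, htS, htmin⟩ := Finset.exists_min_image S p hSne
    obtain ⟨j0, hj0S, hj0min⟩ := Finset.exists_min_image S h hSne
    have htR : t ∈ R := hSR htS
    have hj0R : j0 ∈ R := hSR hj0S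
    have hj0pos : 0 < h j0 := (hpos j0 hj0R).2.1
    set B := R \ S with hB
    have hBsub : B ⊆ R := Finset.sdiff_subset
    have hBnn : (0:ℝ) ≤ ∑ i ∈ B, h i :=
      Finset.sum_nonneg fun i hi => (hpos i (hBsub hi)).2.1.le
    have hBbound : ∀ i ∈ B, h i ≤ h j0 := fun i hi => hStop j0 hj0S i hi
    set m : ℕ := ⌈(∑ i ∈ B, h i) / h j0⌉₊ with hm
    have hq_nonneg : (0:ℝ) ≤ (∑ i ∈ B, h i) / h j0 := div_nonneg hBnn hj0pos.le
    -- m ≤ B.card ≤ R.card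
    have hBsum_le : ∑ i ∈ B, h i ≤ (B.card : ℝ) * h j0 := by
      calc ∑ i ∈ B, h i ≤ ∑ i ∈ B, h j0 := Finset.sum_le_sum hBbound
        _ = (B.card : ℝ) * h j0 := by rw [Finset.sum_const, nsmul_eq_mul]
    have hmB : m ≤ B.card := by
      rw [hm]
      exact Nat.ceil_le.mpr (by rw [div_le_iff₀ hj0pos]; exact hBsum_le)
    have hmR : m ≤ R.card := hmB.trans (Finset.card_le_card hBsub)
    set T := S.erase t with hT
    have hTcard : T.card = k := by rw [hT, Finset.card_erase_of_mem htS, hScard]; omega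
    have hTR : T ⊆ R := (Finset.erase_subset t S).trans hSR
    set R' := R.erase t with hR'
    have hR'R : R' ⊆ R := Finset.erase_subset t R
    -- sum decompositions
    have hRsplit : ∑ i ∈ R, h i = ∑ i ∈ S, h i + ∑ i ∈ B, h i := by
      rw [hB, ← Finset.sum_sdiff hSR]; ring
    have hSsplit : ∑ i ∈ S, h i = h t + ∑ i ∈ T, h i := by
      rw [hT, Finset.add_sum_erase _ _ htS]
    have hR'split : ∑ i ∈ R', h i = ∑ i ∈ T, h i + ∑ i ∈ B, h i := by
      have : ∑ i ∈ R', h i = ∑ i ∈ R, h i - h t := by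
        rw [hR', Finset.sum_erase_eq_sub htR]
      rw [this, hRsplit, hSsplit]; ring
    set H' : ℝ := (∑ i ∈ T, h i) + (m : ℝ) * h j0 with hH'
    -- H' ≥ sum over R'
    have hge : ∑ i ∈ R', h i ≤ H' := by
      rw [hR'split, hH']
      have : ∑ i ∈ B, h i ≤ (m : ℝ) * h j0 := by
        have := Nat.le_ceil ((∑ i ∈ B, h i) / h j0)
        calc ∑ i ∈ B, h i = (∑ i ∈ B, h i) / h j0 * h j0 := by
              field_simp
          _ ≤ (m : ℝ) * h j0 := by
              apply mul_le_mul_of_nonneg_right this hj0pos.le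
      linarith
    -- H' ≤ H
    have hle : H' ≤ H := by
      have hmlt : (m : ℝ) ≤ (∑ i ∈ B, h i) / h j0 + 1 := by
        rw [hm]
        exact (Nat.ceil_lt_add_one hq_nonneg).le
      have : (m : ℝ) * h j0 ≤ ∑ i ∈ B, h i + h j0 := by
        have := mul_le_mul_of_nonneg_right hmlt hj0pos.le
        calc (m:ℝ) * h j0 ≤ ((∑ i ∈ B, h i) / h j0 + 1) * h j0 := this
          _ = ∑ i ∈ B, h i + h j0 := by field_simp
      have hj0t : h j0 ≤ h t := hj0min t htS
      have : H' ≤ ∑ i ∈ R, h i := by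
        rw [hH', hRsplit, hSsplit]; linarith
      linarith
    -- profit bound
    have hpt : p t ≤ ε * ∑ i ∈ R, p i := by
      have h1 : ((k:ℝ) + 1) * p t ≤ ∑ i ∈ S, p i := by
        have : ∀ i ∈ S, p t ≤ p i := htmin
        calc ((k:ℝ) + 1) * p t = ∑ _i ∈ S, p t := by
              rw [Finset.sum_const, nsmul_eq_mul, hScard]; push_cast; ring
          _ ≤ ∑ i ∈ S, p i := Finset.sum_le_sum this
      have h2 : ∑ i ∈ S, p i ≤ ∑ i ∈ R, p i :=
        Finset.sum_le_sum_of_subset_of_nonneg hSR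
          (fun i hi _ => (hpos i hi).2.2.le)
      have hεk : 1 ≤ ε * k := by
        rw [div_le_iff₀ hε0] at hk; linarith
      have hkpos : (0:ℝ) < (k:ℝ) + 1 := by positivity
      have hpt_nonneg : 0 ≤ p t := (hpos t htR).2.2.le
      have : p t ≤ (∑ i ∈ R, p i) / ((k:ℝ) + 1) := by
        rw [le_div_iff₀ hkpos]; linarith
      have h3 : (∑ i ∈ R, p i) / ((k:ℝ) + 1) ≤ ε * ∑ i ∈ R, p i := by
        rw [div_le_iff₀ hkpos]
        nlinarith
      linarith
    have hprofit : (1 - ε) * ∑ i ∈ R, p i ≤ ∑ i ∈ R', p i := by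
      have : ∑ i ∈ R', p i = ∑ i ∈ R, p i - p t := by
        rw [hR', Finset.sum_erase_eq_sub htR]
      rw [this]; linarith
    exact ⟨R', hR'R, hprofit, w a, H', hwidth a haR, hle, ⟨a, haR, rfl⟩,
      ⟨T, hTR, hTcard.le, j0, hj0R, m, hmR, rfl⟩,
      fun i hi => hamax i (hR'R hi), hge⟩
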